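/- Let r be a rational function of the form r(z) = Σ_{j=1}^n c_j/(z−a_j)² + Σ_{j=1}^n c_j'/(z−a_j) with all poles a_j on the unit circle and not all c_j, c_j' zero, and suppose r is bounded in the norm ‖r‖ = sup_{|z|<1}(1−|z|²)²|r(z)| < ∞. If r'(0) ≠ 0, then the function F(z) = (1−|z|²)²|r(z)| on the closed unit disk does not attain its maximum at z = 0. -/

import Mathlib

/-- for a rational function `r` of the form (3) with poles of order two
on the unit circle, bounded in the `B₂` norm, if `r'(0) ≠ 0` then
`F(z) = (1-|z|²)² |r(z)|` does not attain its maximum over the unit disk at `z = 0`. -/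
theorem stmt5 (n : ℕ) (a c c' : Fin n → ℂ) (ha : ∀ j, ‖a j‖ = 1)
    (hc : 0 < ∑ j, ‖c j‖)
    (r : ℂ → ℂ)
    (hr : ∀ z : ℂ, r z = (∑ j, c j / (z - a j) ^ 2) + ∑ j, c' j / (z - a j))
    (hb : ∃ C : ℝ, ∀ z : ℂ, ‖z‖ < 1 → (1 - ‖z‖ ^ 2) ^ 2 * ‖r z‖ ≤ C)
    (hd : deriv r 0 ≠ 0) :
    ∃ z : ℂ, ‖z‖ < 1 ∧ ‖r 0‖ < (1 - ‖z‖ ^ 2) ^ 2 * ‖r z‖ := by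
  have hre : r = fun z => (∑ j, c j / (z - a j) ^ 2) + ∑ j, c' j / (z - a j) := funext hr
  have hdiff : ∀ z : ℂ, ‖z‖ < 1 → DifferentiableAt ℂ r z := by
    intro z hz
    rw [hre]
    have hne : ∀ j : Fin n, z - a j ≠ 0 := by
      intro j h
      rw [sub_eq_zero] at h
      rw [h, ha j] at hz; exact absurd hz (lt_irrefl _)
    apply DifferentiableAt.add
    · apply DifferentiableAt.fun_sum
      intro j _
      exact (differentiableAt_const _).div ((differentiableAt_fun_id.sub
        (differentiableAt_const _)).pow 2) (pow_ne_zero _ (hne j))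
    · apply DifferentiableAt.fun_sum
      intro j _
      exact (differentiableAt_const _).div (differentiableAt_fun_id.sub
        (differentiableAt_const _)) (hne j)
  have hA : HasDerivAt r (deriv r 0) 0 := (hdiff 0 (by norm_num)).hasDerivAt
  set A := deriv r 0 with hAdef
  set R0 := r 0 with hR0def
  by_cases hr0 : R0 = 0
  · -- r 0 = 0 : find nearby point where r ≠ 0
    have h1 : ¬ (r =ᶠ[nhds (0:ℂ)] fun _ => (0:ℂ)) := by
      intro h
      apply hd
      rw [hAdef, h.deriv_eq, deriv_const]
    have h2 : ∃ᶠ z in nhds (0:ℂ), r z ≠ 0 := Filter.not_eventually.1 h1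
    have hball : Metric.ball (0:ℂ) (1/2) ∈ nhds (0:ℂ) :=
      Metric.ball_mem_nhds 0 (by norm_num)
    obtain ⟨z, hz1, hz2⟩ := (h2.and_eventually hball).exists
    have hzlt : ‖z‖ < 1 := by
      have := Metric.mem_ball.1 hz2
      simp only [dist_zero_right] at this; linarith
    refine ⟨z, hzlt, ?_⟩
    have h3 : 0 < 1 - ‖z‖ ^ 2 := by nlinarith [norm_nonneg z]
    rw [hr0, norm_zero]
    exact mul_pos (pow_pos h3 2) (norm_pos_iff.2 hz1)
  · -- main case
    have hApos : (0:ℝ) < ‖A‖ := norm_pos_iff.2 hd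
    have hRpos : (0:ℝ) < ‖R0‖ := norm_pos_iff.2 hr0
    set u : ℂ := (starRingEnd ℂ) A * R0 / ((‖A‖ : ℂ) * (‖R0‖ : ℂ)) with hu_def
    have hAne : (‖A‖ : ℂ) ≠ 0 := by exact_mod_cast ne_of_gt hApos
    have hRne : (‖R0‖ : ℂ) ≠ 0 := by exact_mod_cast ne_of_gt hRpos
    have hu : ‖u‖ = 1 := by
      rw [hu_def, norm_div, norm_mul, norm_mul, RCLike.norm_conj,
        Complex.norm_real, Complex.norm_real, Real.norm_of_nonneg hApos.le,
        Real.norm_of_nonneg hRpos.le]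
      rw [div_self (by positivity)]
    have h1 : A * ((starRingEnd ℂ) A) = ((‖A‖:ℂ))^2 := by
      rw [Complex.mul_conj, Complex.normSq_eq_norm_sq]
      push_cast; ring
    have h2 : (starRingEnd ℂ) R0 * R0 = ((‖R0‖:ℂ))^2 := by
      rw [mul_comm, Complex.mul_conj, Complex.normSq_eq_norm_sq]
      push_cast; ring
    have hkey : (starRingEnd ℂ) R0 * (A * u) = ((‖A‖ * ‖R0‖ : ℝ) : ℂ) := by
      have e1 : (starRingEnd ℂ) R0 * (A * ((starRingEnd ℂ) A * R0 / ((‖A‖:ℂ)*(‖R0‖:ℂ))))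
          = ((A * (starRingEnd ℂ) A) * ((starRingEnd ℂ) R0 * R0)) / ((‖A‖:ℂ)*(‖R0‖:ℂ)) := by
        ring
      rw [hu_def, e1, h1, h2]
      have hAne' : (‖A‖ : ℂ) * (‖R0‖ : ℂ) ≠ 0 := mul_ne_zero hAne hRne
      rw [div_eq_iff hAne']
      push_cast
      ring
    -- derivative computations
    have hmul : HasDerivAt (fun w : ℂ => w * u) u 0 := by
      simpa using (hasDerivAt_id (0:ℂ)).mul_const u
    have hcomp : HasDerivAt (fun w : ℂ => r (w * u)) (A * u) 0 := by
      have := HasDerivAt.comp (0:ℂ) (by simpa using hA) hmul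
      simpa [mul_comm, Function.comp_def] using this
    have hreal : HasDerivAt (fun t : ℝ => r ((t:ℂ) * u)) (A * u) 0 :=
      HasDerivAt.comp_ofReal (z := 0) (by simpa using hcomp)
    have h4 : HasDerivAt (fun t : ℝ => (starRingEnd ℂ) R0 * r ((t:ℂ) * u))
        ((starRingEnd ℂ) R0 * (A * u)) 0 := hreal.const_mul _
    have hpsi : HasDerivAt (fun t : ℝ => ((starRingEnd ℂ) R0 * r ((t:ℂ) * u)).re)
        (‖A‖ * ‖R0‖) 0 := by
      have h5 := (Complex.reCLM.hasFDerivAt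
        (x := (starRingEnd ℂ) R0 * r (((0:ℝ):ℂ) * u))).comp_hasDerivAt 0 h4
      rw [hkey] at h5
      simpa only [Function.comp_def, Complex.reCLM_apply, Complex.ofReal_re] using h5
    -- G(t) = (1 - t^2)^2 * ψ(t)
    have hp : HasDerivAt (fun t : ℝ => (1 - t^2)^2) 0 0 := by
      have h := ((hasDerivAt_pow 2 (0:ℝ)).const_sub 1).fun_pow 2
      simpa using h
    have hG : HasDerivAt (fun t : ℝ => (1 - t^2)^2 * ((starRingEnd ℂ) R0 * r ((t:ℂ) * u)).re)
        (‖A‖ * ‖R0‖) 0 := by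
      have := hp.mul hpsi
      simpa [Pi.mul_def] using this
    set G := fun t : ℝ => (1 - t^2)^2 * ((starRingEnd ℂ) R0 * r ((t:ℂ) * u)).re with hGdef
    have hm : (0:ℝ) < ‖A‖ * ‖R0‖ := mul_pos hApos hRpos
    have hslope : Filter.Tendsto (slope G 0) (nhdsWithin 0 {(0:ℝ)}ᶜ) (nhds (‖A‖ * ‖R0‖)) :=
      hasDerivAt_iff_tendsto_slope.1 hG
    have hslope' : ∀ᶠ t in nhdsWithin (0:ℝ) (Set.Ioi 0), 0 < slope G 0 t := by
      have := hslope.eventually (eventually_gt_nhds hm)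
      exact this.filter_mono (nhdsWithin_mono 0 (fun x hx => ne_of_gt hx))
    have hsmall : ∀ᶠ t in nhdsWithin (0:ℝ) (Set.Ioi 0), t < 1/2 :=
      Filter.Eventually.filter_mono nhdsWithin_le_nhds
        (eventually_lt_nhds (by norm_num : (0:ℝ) < 1/2))
    have hpos : ∀ᶠ t in nhdsWithin (0:ℝ) (Set.Ioi 0), 0 < t :=
      eventually_mem_nhdsWithin
    obtain ⟨t, ht1, ht2, ht3⟩ := (hslope'.and (hsmall.and hpos)).exists
    -- G t > G 0
    have hGt : G 0 < G t := by
      have : slope G 0 t = (G t - G 0) / t := by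
        rw [slope_def_field]; ring_nf
      rw [this] at ht1
      have := mul_pos ht1 ht3
      rw [div_mul_cancel₀ _ (ne_of_gt ht3)] at this
      linarith
    have hG0 : G 0 = ‖R0‖^2 := by
      show (1 - (0:ℝ)^2)^2 * ((starRingEnd ℂ) R0 * r (((0:ℝ):ℂ) * u)).re = ‖R0‖^2
      rw [show ((0:ℝ):ℂ) * u = 0 from by simp, ← hR0def, h2,
        show ((‖R0‖:ℂ))^2 = ((‖R0‖^2 : ℝ) : ℂ) from by push_cast; ring,
        Complex.ofReal_re]
      norm_num
    refine ⟨(t:ℂ) * u, ?_, ?_⟩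
    · rw [norm_mul, hu, mul_one, Complex.norm_real, Real.norm_of_nonneg ht3.le]
      linarith
    · have hnz : ‖(t:ℂ) * u‖ = t := by
        rw [norm_mul, hu, mul_one, Complex.norm_real, Real.norm_of_nonneg ht3.le]
      rw [hnz]
      have hle : G t ≤ (1 - t^2)^2 * (‖R0‖ * ‖r ((t:ℂ) * u)‖) := by
        have hre2 : ((starRingEnd ℂ) R0 * r ((t:ℂ) * u)).re ≤ ‖R0‖ * ‖r ((t:ℂ) * u)‖ := by
          calc ((starRingEnd ℂ) R0 * r ((t:ℂ) * u)).re
              ≤ ‖(starRingEnd ℂ) R0 * r ((t:ℂ) * u)‖ := Complex.re_le_norm _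
            _ = ‖R0‖ * ‖r ((t:ℂ) * u)‖ := by rw [norm_mul, RCLike.norm_conj]
        have hco : (0:ℝ) ≤ (1 - t^2)^2 := sq_nonneg _
        exact mul_le_mul_of_nonneg_left hre2 hco
      have : ‖R0‖^2 < (1 - t^2)^2 * (‖R0‖ * ‖r ((t:ℂ) * u)‖) := by
        rw [← hG0]; exact lt_of_lt_of_le hGt hle
      nlinarith [hRpos]
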